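/- Suppose (T, ν) has polynomial decay of correlations with constant C > 0. Let τ > 0 and let (u_m) be a sequence of reals with m · ℙ(X_0 > u_m) → τ as m → ∞, and let (α_m) and (k_m) be sequences of positive integers with α_m → ∞ and k_m → ∞. Then m · Σ_{j=α_m}^{⌊m/k_m⌋} ℙ(X_0 > u_m and X_j > u_m) → 0 as m → ∞ (the sum being understood as 0 when α_m > ⌊m/k_m⌋). -/

import Mathlib

open MeasureTheory Metric Set Filter Topology

noncomputable section

/-- The `d`-dimensional torus `(ℝ/ℤ)^d`. -/
abbrev Torus (d : ℕ) := Fin d → AddCircle (1 : ℝ)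

/-- Translation of a torus point by a vector `w ∈ ℝ^d` (via the projection `ℝ^d → 𝕋^d`). -/
def tr {d : ℕ} (x : Torus d) (w : EuclideanSpace ℝ (Fin d)) : Torus d :=
  fun i => x i + (w i : AddCircle (1 : ℝ))

/-- The translation-invariant metric on the torus induced by the Euclidean norm on `ℝ^d`. -/
def tdist {d : ℕ} (x y : Torus d) : ℝ :=
  Real.sqrt (∑ i, dist (x i) (y i) ^ 2)

/-- The open ball of center `p` and radius `r` in the torus, for the metric `tdist`. -/
def tball {d : ℕ} (p : Torus d) (r : ℝ) : Set (Torus d) := {y | tdist y p < r}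

/-- The observable process `X_i(x, ξ̄) = -log dist(T^i x + ε ξ_i, z)`. -/
def Xobs {d : ℕ} (T : Torus d → Torus d) (z : Torus d) (ε : ℝ) (i : ℕ)
    (p : Torus d × (ℕ → EuclideanSpace ℝ (Fin d))) : ℝ :=
  - Real.log (tdist (tr (T^[i] p.1) (ε • p.2 i)) z)

/-- `Θ` is the infinite product measure `θ^{⊗ℕ}`: every finite-dimensional marginal of `Θ`
is the corresponding finite product of copies of `θ`. -/
def IsIIDProduct {d : ℕ} (θ : Measure (EuclideanSpace ℝ (Fin d)))
    (Θ : Measure (ℕ → EuclideanSpace ℝ (Fin d))) : Prop :=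
  ∀ n : ℕ, Θ.map (fun ξ (i : Fin n) => ξ i) = Measure.pi fun _ : Fin n => θ

/-- `(T, ν)` has polynomial decay of correlations with constant `C`:
for every `g ∈ L¹(ν)`, every bounded Borel `h` and every `t ≥ 1`,
`|∫ g ⬝ (h ∘ T^t) dν − (∫ g dν)(∫ h dν)| ≤ C ‖h‖_∞ ‖g‖_{L¹(ν)} t^{-2}`. -/
def DecayCor {d : ℕ} (T : Torus d → Torus d) (ν : Measure (Torus d)) (C : ℝ) : Prop :=
  ∀ g : Torus d → ℝ, Integrable g ν →
    ∀ h : Torus d → ℝ, Measurable h → ∀ K : ℝ, (∀ x, |h x| ≤ K) →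
      ∀ t : ℕ, 1 ≤ t →
        |(∫ x, g x * h (T^[t] x) ∂ν) - (∫ x, g x ∂ν) * ∫ x, h x ∂ν| ≤
          C * K * (∫ x, |g x| ∂ν) / (t : ℝ) ^ 2

/-! ### Auxiliary lemmas -/

section Aux

theorem aux_tdist_cont {d : ℕ} (z : Torus d) (ε : ℝ) :
    Continuous (fun q : Torus d × EuclideanSpace ℝ (Fin d) => tdist (tr q.1 (ε • q.2)) z) := by
  unfold tdist tr
  apply Real.continuous_sqrt.comp
  apply continuous_finset_sum
  intro i _
  apply Continuous.pow
  apply Continuous.dist _ continuous_const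
  apply Continuous.add ((continuous_apply i).comp continuous_fst)
  have hsm : Continuous fun q : Torus d × EuclideanSpace ℝ (Fin d) => ε • q.2 :=
    continuous_snd.const_smul ε
  have h2 : Continuous fun q : Torus d × EuclideanSpace ℝ (Fin d) => (ε • q.2) i :=
    (EuclideanSpace.proj (𝕜 := ℝ) i).continuous.comp hsm
  exact (AddCircle.continuous_mk' 1).comp h2

variable {E : Type*} [MeasurableSpace E]
variable (θ : Measure E) [IsProbabilityMeasure θ]
variable (Θ : Measure (ℕ → E))

/-- Single-coordinate marginal of an i.i.d. product is `θ`. -/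
theorem aux_coord_zero
    (hΘ : ∀ n : ℕ, Θ.map (fun ξ (i : Fin n) => ξ i) = Measure.pi fun _ : Fin n => θ)
    (S : Set E) (hS : MeasurableSet S) :
    Θ {ξ | ξ 0 ∈ S} = θ S := by
  have hmeas : Measurable fun (ξ : ℕ → E) (i : Fin 1) => ξ i :=
    measurable_pi_lambda _ fun i => measurable_pi_apply _
  have hset : {ξ : ℕ → E | ξ 0 ∈ S} =
      (fun (ξ : ℕ → E) (i : Fin 1) => ξ i) ⁻¹' (Set.pi Set.univ fun _ : Fin 1 => S) := by
    ext ξ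
    simp [Set.mem_pi, Fin.forall_fin_one]
  rw [hset, ← Measure.map_apply hmeas (MeasurableSet.univ_pi fun _ => hS), hΘ 1,
    Measure.pi_pi]
  simp

/-- Two-coordinate marginal of an i.i.d. product is `θ ⊗ θ` (independence). -/
theorem aux_coord_pair
    (hΘ : ∀ n : ℕ, Θ.map (fun ξ (i : Fin n) => ξ i) = Measure.pi fun _ : Fin n => θ)
    (j : ℕ) (hj : 1 ≤ j) (S₁ S₂ : Set E) (h₁ : MeasurableSet S₁) (h₂ : MeasurableSet S₂) :
    Θ {ξ | ξ 0 ∈ S₁ ∧ ξ j ∈ S₂} = θ S₁ * θ S₂ := by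
  set n := j + 1 with hn
  set i0 : Fin n := ⟨0, Nat.succ_pos j⟩ with hi0
  set ij : Fin n := ⟨j, Nat.lt_succ_self j⟩ with hij
  have hne : i0 ≠ ij := by
    simp only [hi0, hij, Ne, Fin.mk.injEq]
    omega
  set c : Fin n → Set E := fun i => if i = i0 then S₁ else if i = ij then S₂ else Set.univ
    with hc
  have hcm : ∀ i, MeasurableSet (c i) := by
    intro i
    simp only [hc]
    split_ifs <;> first | exact h₁ | exact h₂ | exact MeasurableSet.univ
  have hmeas : Measurable fun (ξ : ℕ → E) (i : Fin n) => ξ i :=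
    measurable_pi_lambda _ fun i => measurable_pi_apply _
  have hset : {ξ : ℕ → E | ξ 0 ∈ S₁ ∧ ξ j ∈ S₂} =
      (fun (ξ : ℕ → E) (i : Fin n) => ξ i) ⁻¹' (Set.pi Set.univ c) := by
    ext ξ
    simp only [Set.mem_setOf_eq, Set.mem_preimage, Set.mem_pi, Set.mem_univ, true_imp_iff]
    constructor
    · rintro ⟨hA, hB⟩ i
      simp only [hc]
      split_ifs with hA' hB'
      · subst hA'; exact hA
      · subst hB'; exact hB
      · trivial
    · intro h
      refine ⟨?_, ?_⟩
      · have := h i0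
        simpa [hc] using this
      · have := h ij
        simpa [hc, hne.symm] using this
  rw [hset, ← Measure.map_apply hmeas (MeasurableSet.univ_pi hcm), hΘ n, Measure.pi_pi]
  rw [← Finset.prod_subset (Finset.subset_univ ({i0, ij} : Finset (Fin n)))]
  · rw [Finset.prod_pair hne]
    simp [hc, hne.symm]
  · intro i _ hi
    simp only [Finset.mem_insert, Finset.mem_singleton, not_or] at hi
    simp [hc, hi.1, hi.2]

/-- Tail bound: `∑_{j=a}^{N} 1/j² ≤ 2/a` for `a ≥ 1`. -/
theorem aux_tail_bound (a N : ℕ) (ha : 1 ≤ a) :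
    ∑ j ∈ Finset.Icc a N, (1 : ℝ) / (j : ℝ) ^ 2 ≤ 2 / (a : ℝ) := by
  set F : ℕ → ℝ := fun j => 2 / (j : ℝ) with hF
  have key : ∑ j ∈ Finset.Icc a N, (1 : ℝ) / (j : ℝ) ^ 2 ≤
      ∑ j ∈ Finset.Icc a N, (F j - F (j + 1)) := by
    apply Finset.sum_le_sum
    intro j hj
    have hj1 : 1 ≤ j := le_trans ha (Finset.mem_Icc.mp hj).1
    have hj1' : (1 : ℝ) ≤ (j : ℝ) := by exact_mod_cast hj1
    have hjpos : (0 : ℝ) < (j : ℝ) := by linarith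
    simp only [hF]
    push_cast
    rw [div_sub_div _ _ (ne_of_gt hjpos) (by positivity), div_le_div_iff₀ (by positivity)
      (by positivity)]
    nlinarith
  refine le_trans key ?_
  have hIcc : ∑ j ∈ Finset.Icc a N, (F j - F (j + 1)) =
      ∑ i ∈ Finset.range (N + 1 - a), (F (a + i) - F (a + i + 1)) := by
    rw [← Finset.Ico_add_one_right_eq_Icc, Finset.sum_Ico_eq_sum_range]
  have htel : ∑ i ∈ Finset.range (N + 1 - a), (F (a + i) - F (a + i + 1)) =
      F a - F (a + (N + 1 - a)) := Finset.sum_range_sub' (fun i => F (a + i)) (N + 1 - a)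
  rw [hIcc, htel]
  have h1 : (0 : ℝ) ≤ F (a + (N + 1 - a)) := by positivity
  have h2 : F a = 2 / (a : ℝ) := rfl
  linarith [h2 ▸ le_refl (F a)]


section Aux2

variable {d : ℕ} (z : Torus d) (ε : ℝ) (θ : Measure (EuclideanSpace ℝ (Fin d)))

/-- The section set `{w | a < -log dist(y + εw, z)}`. -/
def auxQs (a : ℝ) (y : Torus d) : Set (EuclideanSpace ℝ (Fin d)) :=
  {w | a < - Real.log (tdist (tr y (ε • w)) z)}

/-- `θ`-measure of the section set, as a function of the base point. -/
def auxgE (a : ℝ) (y : Torus d) : ENNReal := θ (auxQs z ε a y)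

/-- Real-valued version of `auxgE`. -/
def auxG (a : ℝ) (y : Torus d) : ℝ := (auxgE z ε θ a y).toReal

theorem auxQs_meas (a : ℝ) (y : Torus d) : MeasurableSet (auxQs z ε a y) := by
  have hΦm : Measurable
      (fun q : Torus d × EuclideanSpace ℝ (Fin d) => - Real.log (tdist (tr q.1 (ε • q.2)) z)) :=
    (Real.measurable_log.comp (aux_tdist_cont z ε).measurable).neg
  have h0 : Measurable fun w : EuclideanSpace ℝ (Fin d) =>
      ((y, w) : Torus d × EuclideanSpace ℝ (Fin d)) :=
    measurable_const.prodMk measurable_id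
  have : Measurable fun w : EuclideanSpace ℝ (Fin d) =>
      - Real.log (tdist (tr y (ε • w)) z) := fun s hs => h0 (hΦm hs)
  exact measurableSet_lt measurable_const this

theorem auxgE_meas [SFinite θ] (a : ℝ) : Measurable (auxgE z ε θ a) := by
  have hps : MeasurableSet
      {q : Torus d × EuclideanSpace ℝ (Fin d) | a < - Real.log (tdist (tr q.1 (ε • q.2)) z)} :=
    measurableSet_lt measurable_const
      ((Real.measurable_log.comp (aux_tdist_cont z ε).measurable).neg)
  exact measurable_measure_prodMk_left hps

end Aux2

end Aux

theorem statement_14 {d : ℕ} (hd : 1 ≤ d)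
    (T : Torus d → Torus d) (hT : Measurable T)
    (ν : Measure (Torus d)) [IsProbabilityMeasure ν]
    (θ : Measure (EuclideanSpace ℝ (Fin d))) [IsProbabilityMeasure θ]
    (hθS : θ (Metric.closedBall 0 1) = 1)
    (Θ : Measure (ℕ → EuclideanSpace ℝ (Fin d))) [IsProbabilityMeasure Θ]
    (hΘ : IsIIDProduct θ Θ)
    (ε : ℝ) (hε : 0 < ε) (z : Torus d)
    (C : ℝ) (hC : 0 < C) (hdecay : DecayCor T ν C)
    (τ : ℝ) (hτ : 0 < τ) (u : ℕ → ℝ)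
    (hu : Tendsto (fun m : ℕ =>
        (m : ℝ) * ((ν.prod Θ) {p | u m < Xobs T z ε 0 p}).toReal) atTop (𝓝 τ))
    (α : ℕ → ℕ) (hα0 : ∀ m, 0 < α m) (hα : Tendsto α atTop atTop)
    (k : ℕ → ℕ) (hk0 : ∀ m, 0 < k m) (hk : Tendsto k atTop atTop) :
    Tendsto (fun m : ℕ => (m : ℝ) * ∑ j ∈ Finset.Icc (α m) (m / k m),
        ((ν.prod Θ) {p | u m < Xobs T z ε 0 p ∧ u m < Xobs T z ε j p}).toReal)
      atTop (𝓝 0) := by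
  classical
  have hΦm : Measurable
      (fun q : Torus d × EuclideanSpace ℝ (Fin d) => - Real.log (tdist (tr q.1 (ε • q.2)) z)) :=
    (Real.measurable_log.comp (aux_tdist_cont z ε).measurable).neg
  -- Xobs measurability
  have hXm : ∀ i : ℕ,
      Measurable fun p : Torus d × (ℕ → EuclideanSpace ℝ (Fin d)) => Xobs T z ε i p := by
    intro i
    have hmap : Measurable fun p : Torus d × (ℕ → EuclideanSpace ℝ (Fin d)) =>
        ((T^[i] p.1, p.2 i) : Torus d × EuclideanSpace ℝ (Fin d)) :=
      ((hT.iterate i).comp measurable_fst).prodMk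
        ((measurable_pi_apply i).comp measurable_snd)
    exact fun s hs => hmap (hΦm hs)
  have hEv : ∀ (a : ℝ) (i : ℕ),
      MeasurableSet {p : Torus d × (ℕ → EuclideanSpace ℝ (Fin d)) | a < Xobs T z ε i p} :=
    fun a i => measurableSet_lt measurable_const (hXm i)
  have hgE_meas : ∀ a : ℝ, Measurable (auxgE z ε θ a) := fun a => auxgE_meas z ε θ a
  have hgE_comp_meas : ∀ (a : ℝ) (j : ℕ), Measurable fun y => auxgE z ε θ a (T^[j] y) :=
    fun a j s hs => (hT.iterate j) ((hgE_meas a) hs)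
  have hgE_le : ∀ (a : ℝ) (y : Torus d), auxgE z ε θ a y ≤ 1 := fun a y => prob_le_one
  have hG_meas : ∀ a : ℝ, Measurable (auxG z ε θ a) := fun a => (hgE_meas a).ennreal_toReal
  have hG_nonneg : ∀ (a : ℝ) (y : Torus d), 0 ≤ auxG z ε θ a y :=
    fun a y => ENNReal.toReal_nonneg
  have hG_le_one : ∀ (a : ℝ) (y : Torus d), auxG z ε θ a y ≤ 1 := by
    intro a y
    have := ENNReal.toReal_mono (by simp) (hgE_le a y)
    simpa [auxG] using this
  have hG_int : ∀ a : ℝ, Integrable (auxG z ε θ a) ν := by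
    intro a
    refine (integrable_const (1 : ℝ)).mono' (hG_meas a).aestronglyMeasurable ?_
    refine ae_of_all _ fun y => ?_
    rw [Real.norm_eq_abs, abs_of_nonneg (hG_nonneg a y)]
    exact hG_le_one a y
  -- Step A : the one-event probability
  have hA : ∀ a : ℝ, (ν.prod Θ) {p | a < Xobs T z ε 0 p} = ∫⁻ y, auxgE z ε θ a y ∂ν := by
    intro a
    rw [Measure.prod_apply (hEv a 0)]
    apply lintegral_congr
    intro x
    have hsec : (Prod.mk x ⁻¹' {p : Torus d × (ℕ → EuclideanSpace ℝ (Fin d)) |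
        a < Xobs T z ε 0 p}) = {ξ : ℕ → EuclideanSpace ℝ (Fin d) | ξ 0 ∈ auxQs z ε a x} := rfl
    rw [hsec, aux_coord_zero θ Θ hΘ (auxQs z ε a x) (auxQs_meas z ε a x)]
    rfl
  -- Step B : the joint probability
  have hB : ∀ (a : ℝ) (j : ℕ), 1 ≤ j →
      (ν.prod Θ) {p | a < Xobs T z ε 0 p ∧ a < Xobs T z ε j p} =
        ∫⁻ y, auxgE z ε θ a y * auxgE z ε θ a (T^[j] y) ∂ν := by
    intro a j hj
    have hmeasset : MeasurableSet {p : Torus d × (ℕ → EuclideanSpace ℝ (Fin d)) |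
        a < Xobs T z ε 0 p ∧ a < Xobs T z ε j p} := (hEv a 0).inter (hEv a j)
    rw [Measure.prod_apply hmeasset]
    apply lintegral_congr
    intro x
    have hsec : (Prod.mk x ⁻¹' {p : Torus d × (ℕ → EuclideanSpace ℝ (Fin d)) |
        a < Xobs T z ε 0 p ∧ a < Xobs T z ε j p}) =
        {ξ : ℕ → EuclideanSpace ℝ (Fin d) |
          ξ 0 ∈ auxQs z ε a x ∧ ξ j ∈ auxQs z ε a (T^[j] x)} := rfl
    rw [hsec, aux_coord_pair θ Θ hΘ j hj _ _ (auxQs_meas z ε a x)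
      (auxQs_meas z ε a (T^[j] x))]
    rfl
  -- Step C : real-valued versions
  have hpc : ∀ a : ℝ,
      ((ν.prod Θ) {p | a < Xobs T z ε 0 p}).toReal = ∫ y, auxG z ε θ a y ∂ν := by
    intro a
    have hlt : ∀ᵐ y ∂ν, auxgE z ε θ a y < ⊤ :=
      ae_of_all _ fun y => lt_of_le_of_lt (hgE_le a y) ENNReal.one_lt_top
    rw [hA a, ← integral_toReal (hgE_meas a).aemeasurable hlt]
    rfl
  have hjc : ∀ (a : ℝ) (j : ℕ), 1 ≤ j →
      ((ν.prod Θ) {p | a < Xobs T z ε 0 p ∧ a < Xobs T z ε j p}).toReal =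
        ∫ y, auxG z ε θ a y * auxG z ε θ a (T^[j] y) ∂ν := by
    intro a j hj
    rw [hB a j hj, ← integral_toReal]
    · apply integral_congr_ae
      refine ae_of_all _ fun y => ?_
      simp [auxG, ENNReal.toReal_mul]
    · exact ((hgE_meas a).mul (hgE_comp_meas a j)).aemeasurable
    · refine ae_of_all _ fun y => ?_
      calc auxgE z ε θ a y * auxgE z ε θ a (T^[j] y) ≤ 1 * 1 :=
            mul_le_mul' (hgE_le a y) (hgE_le a (T^[j] y))
        _ < ⊤ := by simp
  -- Decay bound
  have hp_nonneg : ∀ m : ℕ, (0 : ℝ) ≤ ((ν.prod Θ) {q | u m < Xobs T z ε 0 q}).toReal :=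
    fun m => ENNReal.toReal_nonneg
  have hbd : ∀ (m j : ℕ), 1 ≤ j →
      ((ν.prod Θ) {q | u m < Xobs T z ε 0 q ∧ u m < Xobs T z ε j q}).toReal ≤
        ((ν.prod Θ) {q | u m < Xobs T z ε 0 q}).toReal ^ 2 +
          C * ((ν.prod Θ) {q | u m < Xobs T z ε 0 q}).toReal / (j : ℝ) ^ 2 := by
    intro m j hj
    have hdec := hdecay (auxG z ε θ (u m)) (hG_int (u m)) (auxG z ε θ (u m)) (hG_meas (u m)) 1
      (fun x => by rw [abs_of_nonneg (hG_nonneg _ x)]; exact hG_le_one _ x) j hj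
    have habs : (∫ x, |auxG z ε θ (u m) x| ∂ν) = ∫ x, auxG z ε θ (u m) x ∂ν := by
      apply integral_congr_ae
      exact ae_of_all _ fun y => abs_of_nonneg (hG_nonneg _ y)
    rw [habs] at hdec
    have h1 : (∫ x, auxG z ε θ (u m) x * auxG z ε θ (u m) (T^[j] x) ∂ν) ≤
        (∫ x, auxG z ε θ (u m) x ∂ν) * (∫ x, auxG z ε θ (u m) x ∂ν) +
          C * 1 * (∫ x, auxG z ε θ (u m) x ∂ν) / (j : ℝ) ^ 2 := by
      have h2 := (abs_le.mp hdec).2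
      have h3 := le_abs_self ((∫ x, auxG z ε θ (u m) x * auxG z ε θ (u m) (T^[j] x) ∂ν) -
        (∫ x, auxG z ε θ (u m) x ∂ν) * ∫ x, auxG z ε θ (u m) x ∂ν)
      linarith
    rw [hjc (u m) j hj]
    simp only [hpc (u m)]
    calc (∫ x, auxG z ε θ (u m) x * auxG z ε θ (u m) (T^[j] x) ∂ν)
        ≤ (∫ x, auxG z ε θ (u m) x ∂ν) * (∫ x, auxG z ε θ (u m) x ∂ν) +
          C * 1 * (∫ x, auxG z ε θ (u m) x ∂ν) / (j : ℝ) ^ 2 := h1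
      _ = (∫ x, auxG z ε θ (u m) x ∂ν) ^ 2 +
          C * (∫ x, auxG z ε θ (u m) x ∂ν) / (j : ℝ) ^ 2 := by ring
  -- Final assembly
  set p : ℕ → ℝ := fun m => ((ν.prod Θ) {q | u m < Xobs T z ε 0 q}).toReal with hp_def
  have hF_nonneg : ∀ m : ℕ, 0 ≤ (m : ℝ) * ∑ j ∈ Finset.Icc (α m) (m / k m),
      ((ν.prod Θ) {q | u m < Xobs T z ε 0 q ∧ u m < Xobs T z ε j q}).toReal := by
    intro m
    apply mul_nonneg (Nat.cast_nonneg m)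
    exact Finset.sum_nonneg fun j _ => ENNReal.toReal_nonneg
  have hF_le : ∀ m : ℕ, (m : ℝ) * ∑ j ∈ Finset.Icc (α m) (m / k m),
      ((ν.prod Θ) {q | u m < Xobs T z ε 0 q ∧ u m < Xobs T z ε j q}).toReal ≤
        ((m : ℝ) * p m) ^ 2 / (k m : ℝ) + C * ((m : ℝ) * p m) * (2 / (α m : ℝ)) := by
    intro m
    set N := m / k m with hN
    have hsum1 : ∑ j ∈ Finset.Icc (α m) N,
        ((ν.prod Θ) {q | u m < Xobs T z ε 0 q ∧ u m < Xobs T z ε j q}).toReal ≤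
          ∑ j ∈ Finset.Icc (α m) N, (p m ^ 2 + C * p m / (j : ℝ) ^ 2) := by
      apply Finset.sum_le_sum
      intro j hj
      exact hbd m j (le_trans (hα0 m) (Finset.mem_Icc.mp hj).1)
    have hsum2 : ∑ j ∈ Finset.Icc (α m) N, (p m ^ 2 + C * p m / (j : ℝ) ^ 2) =
        (Finset.Icc (α m) N).card * p m ^ 2 +
          C * p m * ∑ j ∈ Finset.Icc (α m) N, (1 : ℝ) / (j : ℝ) ^ 2 := by
      rw [Finset.sum_add_distrib, Finset.sum_const, Finset.mul_sum, nsmul_eq_mul]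
      congr 1
      apply Finset.sum_congr rfl
      intro j _
      ring
    have htail : ∑ j ∈ Finset.Icc (α m) N, (1 : ℝ) / (j : ℝ) ^ 2 ≤ 2 / (α m : ℝ) :=
      aux_tail_bound (α m) N (hα0 m)
    have hcard : ((Finset.Icc (α m) N).card : ℝ) ≤ (m : ℝ) / (k m : ℝ) := by
      have h1 : (Finset.Icc (α m) N).card ≤ N := by
        rw [Nat.card_Icc]
        calc N + 1 - α m ≤ N + 1 - 1 := Nat.sub_le_sub_left (hα0 m) (N + 1)
          _ = N := Nat.succ_sub_one N
      calc ((Finset.Icc (α m) N).card : ℝ) ≤ (N : ℝ) := by exact_mod_cast h1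
        _ ≤ (m : ℝ) / (k m : ℝ) := Nat.cast_div_le
    have hCp : 0 ≤ C * p m := mul_nonneg (le_of_lt hC) (hp_nonneg m)
    have step : ∑ j ∈ Finset.Icc (α m) N,
        ((ν.prod Θ) {q | u m < Xobs T z ε 0 q ∧ u m < Xobs T z ε j q}).toReal ≤
          ((m : ℝ) / (k m : ℝ)) * p m ^ 2 + C * p m * (2 / (α m : ℝ)) := by
      refine le_trans hsum1 ?_
      rw [hsum2]
      have t1 : ((Finset.Icc (α m) N).card : ℝ) * p m ^ 2 ≤
          ((m : ℝ) / (k m : ℝ)) * p m ^ 2 :=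
        mul_le_mul_of_nonneg_right hcard (sq_nonneg _)
      have t2 : C * p m * ∑ j ∈ Finset.Icc (α m) N, (1 : ℝ) / (j : ℝ) ^ 2 ≤
          C * p m * (2 / (α m : ℝ)) := mul_le_mul_of_nonneg_left htail hCp
      linarith
    calc (m : ℝ) * ∑ j ∈ Finset.Icc (α m) N,
        ((ν.prod Θ) {q | u m < Xobs T z ε 0 q ∧ u m < Xobs T z ε j q}).toReal
        ≤ (m : ℝ) * (((m : ℝ) / (k m : ℝ)) * p m ^ 2 + C * p m * (2 / (α m : ℝ))) :=
          mul_le_mul_of_nonneg_left step (Nat.cast_nonneg m)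
      _ = ((m : ℝ) * p m) ^ 2 / (k m : ℝ) + C * ((m : ℝ) * p m) * (2 / (α m : ℝ)) := by
          have hkpos : (0 : ℝ) < (k m : ℝ) := by exact_mod_cast hk0 m
          field_simp
  -- limits
  have hu' : Tendsto (fun m : ℕ => (m : ℝ) * p m) atTop (𝓝 τ) := hu
  have hk' : Tendsto (fun m : ℕ => ((k m : ℝ))⁻¹) atTop (𝓝 0) :=
    tendsto_inv_atTop_zero.comp (tendsto_natCast_atTop_atTop.comp hk)
  have hα' : Tendsto (fun m : ℕ => ((α m : ℝ))⁻¹) atTop (𝓝 0) :=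
    tendsto_inv_atTop_zero.comp (tendsto_natCast_atTop_atTop.comp hα)
  have hB1 : Tendsto (fun m : ℕ => ((m : ℝ) * p m) ^ 2 / (k m : ℝ)) atTop (𝓝 0) := by
    have h := (hu'.pow 2).mul hk'
    rw [mul_zero] at h
    simpa [div_eq_mul_inv] using h
  have hB2 : Tendsto (fun m : ℕ => C * ((m : ℝ) * p m) * (2 / (α m : ℝ))) atTop (𝓝 0) := by
    have h1 : Tendsto (fun m : ℕ => C * ((m : ℝ) * p m)) atTop (𝓝 (C * τ)) := hu'.const_mul C
    have h2 : Tendsto (fun m : ℕ => 2 / (α m : ℝ)) atTop (𝓝 0) := by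
      have := hα'.const_mul (2 : ℝ)
      rw [mul_zero] at this
      simpa [div_eq_mul_inv] using this
    have := h1.mul h2
    rw [mul_zero] at this
    exact this
  have hBtend : Tendsto (fun m : ℕ => ((m : ℝ) * p m) ^ 2 / (k m : ℝ) +
      C * ((m : ℝ) * p m) * (2 / (α m : ℝ))) atTop (𝓝 0) := by
    have := hB1.add hB2
    simpa using this
  exact squeeze_zero hF_nonneg hF_le hBtend
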